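/- Let S = ℂ[α_0, α_1, α_2] be graded by ℤ × ℤ/3 with deg α_0 = (1,0), deg α_1 = (1,1), deg α_2 = (1,2) (Cox ring of the fake projective plane ℙ²/(ℤ/3)). The annihilator of F = x_0⁴ x_1 x_2 ∈ T_{(6,0)} under contraction is (α_0⁵, α_1², α_2²). Moreover, the subring ℂ[α_1³/α_0³, α_2³/α_0³, α_1α_2/α_0²] of the localization (S_{α_0})_0 is isomorphic to ℂ[u,v,w]/(w³ − uv), and its quotient by the images of α_1² and α_2² is isomorphic to ℂ[w]/(w²), a ℂ-vector space of dimension 2. -/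

import Mathlib

open MvPolynomial

set_option maxHeartbeats 1000000
set_option synthInstance.maxHeartbeats 1000000

noncomputable section

/-- Contraction action: on monomials, `x^a ∘ y^b = y^(b-a)` if `a ≤ b`, else `0`. -/
def contract {σ : Type*} (g F : MvPolynomial σ ℂ) : MvPolynomial σ ℂ :=
  ∑ a ∈ g.support, ∑ b ∈ F.support,
    if a ≤ b then monomial (b - a) (g.coeff a * F.coeff b) else 0

/-- The Cox ring `S = ℂ[α₀, α₁, α₂]` of the fake projective plane `ℙ²/(ℤ/3)`
(graded by `ℤ × ℤ/3` with `deg α₀ = (1,0)`, `deg α₁ = (1,1)`, `deg α₂ = (1,2)`). -/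
abbrev Sfpp : Type := MvPolynomial (Fin 3) ℂ

/-- The localization `S_{α₀}`. -/
abbrev Lfpp : Type := Localization.Away (X 0 : Sfpp)

/-- `1/α₀` in the localization. -/
def a0inv : Lfpp := IsLocalization.Away.invSelf (X 0 : Sfpp)

/-- `u = α₁³/α₀³`. -/
def uf : Lfpp := algebraMap Sfpp Lfpp (X 1 ^ 3) * a0inv ^ 3
/-- `v = α₂³/α₀³`. -/
def vf : Lfpp := algebraMap Sfpp Lfpp (X 2 ^ 3) * a0inv ^ 3
/-- `w = α₁α₂/α₀²`. -/
def wf : Lfpp := algebraMap Sfpp Lfpp (X 1 * X 2) * a0inv ^ 2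

/-- The chart subring `ℂ[α₁³/α₀³, α₂³/α₀³, α₁α₂/α₀²]` of `S_{α₀}`. -/
def Bfpp : Subalgebra ℂ Lfpp := Algebra.adjoin ℂ {uf, vf, wf}

instance : HasQuotient ↥Bfpp (Ideal ↥Bfpp) := Ideal.instHasQuotient

/-- The ideal `(u, v, w²)` of the chart ring, generated by the images of `α₁²`
and `α₂²`. -/
def Jfpp : Ideal Bfpp :=
  Ideal.span {⟨uf, Algebra.subset_adjoin (by simp)⟩,
    ⟨vf, Algebra.subset_adjoin (by simp)⟩,
    (⟨wf, Algebra.subset_adjoin (by simp)⟩ : Bfpp) ^ 2}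

instance instCRB : CommRing (↥Bfpp) := inferInstance
instance instCRQB : CommRing (↥Bfpp ⧸ Jfpp) := Ideal.Quotient.commRing Jfpp
instance instAlgQB : Algebra ℂ (↥Bfpp ⧸ Jfpp) := Ideal.Quotient.algebra ℂ

def bexp : Fin 3 →₀ ℕ := Finsupp.single 0 4 + Finsupp.single 1 1 + Finsupp.single 2 1

lemma F_eq : (X 0 ^ 4 * X 1 * X 2 : MvPolynomial (Fin 3) ℂ) = monomial bexp 1 := by
  rw [bexp]
  rw [X_pow_eq_monomial, X, X, monomial_mul, monomial_mul]
  simp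

lemma contract_monomial (g : MvPolynomial (Fin 3) ℂ) (b : Fin 3 →₀ ℕ) :
    contract g (monomial b 1) =
      ∑ a ∈ g.support, if a ≤ b then monomial (b - a) (g.coeff a) else 0 := by
  unfold contract
  refine Finset.sum_congr rfl fun a _ => ?_
  rw [support_monomial, if_neg (one_ne_zero)]
  rw [Finset.sum_singleton, coeff_monomial, if_pos rfl, mul_one]

lemma contract_eq_zero_iff (g : MvPolynomial (Fin 3) ℂ) (b : Fin 3 →₀ ℕ) :
    contract g (monomial b 1) = 0 ↔ ∀ a ∈ g.support, ¬ a ≤ b := by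
  rw [contract_monomial]
  constructor
  · intro h a ha hab
    have hc := congrArg (coeff (b - a)) h
    rw [coeff_zero, coeff_sum] at hc
    rw [Finset.sum_eq_single a (fun a' ha' hne => ?_) (fun h' => absurd ha h')] at hc
    · rw [if_pos hab, coeff_monomial, if_pos rfl] at hc
      exact (mem_support_iff.mp ha) hc
    · split
      · rw [coeff_monomial, if_neg]
        intro hEq
        apply hne
        have : b - (b - a') = b - (b - a) := by rw [hEq]
        rwa [tsub_tsub_cancel_of_le ‹a' ≤ b›, tsub_tsub_cancel_of_le hab] at this
      · exact coeff_zero _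
  · intro h
    refine Finset.sum_eq_zero fun a ha => ?_
    rw [if_neg (h a ha)]

lemma part1 : ({g : MvPolynomial (Fin 3) ℂ | contract g (X 0 ^ 4 * X 1 * X 2) = 0} =
      ↑(Ideal.span {(X 0 : MvPolynomial (Fin 3) ℂ) ^ 5, X 1 ^ 2, X 2 ^ 2})) := by
  have hset : ({(X 0 : MvPolynomial (Fin 3) ℂ) ^ 5, X 1 ^ 2, X 2 ^ 2} : Set (MvPolynomial (Fin 3) ℂ)) =
      (fun s => monomial s (1 : ℂ)) '' {Finsupp.single 0 5, Finsupp.single 1 2, Finsupp.single 2 2} := by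
    rw [Set.image_insert_eq, Set.image_insert_eq, Set.image_singleton]
    simp [X_pow_eq_monomial]
  ext g
  rw [Set.mem_setOf_eq, F_eq, contract_eq_zero_iff, SetLike.mem_coe, hset,
    mem_ideal_span_monomial_image]
  refine forall₂_congr fun m _ => ?_
  constructor
  · intro hm
    rw [Finsupp.le_def] at hm
    push_neg at hm
    obtain ⟨i, hi⟩ := hm
    simp only [bexp, Finsupp.add_apply, Finsupp.single_apply] at hi
    fin_cases i
    · exact ⟨Finsupp.single 0 5, by simp, Finsupp.single_le_iff.mpr (by simp at hi ⊢; omega)⟩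
    · exact ⟨Finsupp.single 1 2, by simp, Finsupp.single_le_iff.mpr (by simp at hi ⊢; omega)⟩
    · exact ⟨Finsupp.single 2 2, by simp, Finsupp.single_le_iff.mpr (by simp at hi ⊢; omega)⟩
  · simp only [Set.mem_insert_iff, Set.mem_singleton_iff]
    rintro ⟨s, (rfl|rfl|rfl), hs⟩ hm <;>
    · have := Finsupp.le_def.mp hm
      have h0 := this 0; have h1 := this 1; have h2 := this 2
      have hs' := Finsupp.single_le_iff.mp hs
      simp [bexp, Finsupp.single_apply] at h0 h1 h2 hs'
      omega


abbrev A2 : Type := MvPolynomial (Fin 2) ℂ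
abbrev Wfpp : Type := AddMonoidAlgebra ℂ (ℤ × ℤ × ℤ)

def ub : Bfpp := ⟨uf, Algebra.subset_adjoin (by simp)⟩
def vb : Bfpp := ⟨vf, Algebra.subset_adjoin (by simp)⟩
def wb : Bfpp := ⟨wf, Algebra.subset_adjoin (by simp)⟩

lemma wf_cube : wf ^ 3 = uf * vf := by
  have h1 : wf ^ 3 = algebraMap Sfpp Lfpp ((X 1 * X 2) ^ 3) * a0inv ^ 6 := by
    rw [wf, mul_pow, ← map_pow, ← pow_mul]
  have h2 : uf * vf = algebraMap Sfpp Lfpp (X 1 ^ 3 * X 2 ^ 3) * a0inv ^ 6 := by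
    rw [uf, vf, map_mul]; ring
  rw [h1, h2, mul_pow]

-- the map to the Laurent world
def τS : Sfpp →ₐ[ℂ] Wfpp :=
  aeval ![AddMonoidAlgebra.single ((1:ℤ),(0:ℤ),(0:ℤ)) 1,
    AddMonoidAlgebra.single ((0:ℤ),(1:ℤ),(0:ℤ)) 1,
    AddMonoidAlgebra.single ((0:ℤ),(0:ℤ),(1:ℤ)) 1]

lemma τS_X0 : τS (X 0) = AddMonoidAlgebra.single ((1:ℤ),(0:ℤ),(0:ℤ)) 1 := by
  simp [τS]

lemma hU : IsUnit (τS.toRingHom (X 0)) := by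
  refine ⟨⟨τS (X 0), AddMonoidAlgebra.single ((-1:ℤ),(0:ℤ),(0:ℤ)) 1, ?_, ?_⟩, rfl⟩ <;>
  · rw [τS_X0, AddMonoidAlgebra.single_mul_single, one_mul]
    first
      | exact (by convert AddMonoidAlgebra.one_def.symm using 2; norm_num [Prod.ext_iff])
      | (convert AddMonoidAlgebra.one_def.symm using 2)

def ρ : Lfpp →+* Wfpp := IsLocalization.Away.lift (g := τS.toRingHom) (X 0 : Sfpp) hU

lemma ρ_algebraMap (s : Sfpp) : ρ (algebraMap Sfpp Lfpp s) = τS s :=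
  IsLocalization.Away.lift_eq _ hU s

lemma ρ_a0inv : ρ a0inv = AddMonoidAlgebra.single ((-1:ℤ),(0:ℤ),(0:ℤ)) 1 := by
  have hinv : algebraMap Sfpp Lfpp (X 0) * a0inv = 1 := IsLocalization.Away.mul_invSelf (X 0)
  have h : τS (X 0) * ρ a0inv = 1 := by
    rw [← ρ_algebraMap, ← map_mul, hinv, map_one]
  have key : AddMonoidAlgebra.single ((-1:ℤ),(0:ℤ),(0:ℤ)) (1:ℂ) *
      AddMonoidAlgebra.single ((1:ℤ),(0:ℤ),(0:ℤ)) (1:ℂ) = 1 := by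
    rw [AddMonoidAlgebra.single_mul_single, one_mul,
      show ((-1:ℤ),(0:ℤ),(0:ℤ)) + ((1:ℤ),(0:ℤ),(0:ℤ)) = 0 from by norm_num [Prod.ext_iff]]
    exact AddMonoidAlgebra.one_def.symm
  calc ρ a0inv = (AddMonoidAlgebra.single ((-1:ℤ),(0:ℤ),(0:ℤ)) (1:ℂ) *
        AddMonoidAlgebra.single ((1:ℤ),(0:ℤ),(0:ℤ)) (1:ℂ)) * ρ a0inv := by rw [key, one_mul]
    _ = AddMonoidAlgebra.single ((-1:ℤ),(0:ℤ),(0:ℤ)) (1:ℂ) * (τS (X 0) * ρ a0inv) := by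
        rw [τS_X0, mul_assoc]
    _ = AddMonoidAlgebra.single ((-1:ℤ),(0:ℤ),(0:ℤ)) (1:ℂ) := by rw [h, mul_one]

lemma ρ_uf : ρ uf = AddMonoidAlgebra.single ((-3:ℤ),(3:ℤ),(0:ℤ)) 1 := by
  simp only [uf, map_mul, map_pow, ρ_algebraMap, ρ_a0inv, τS, aeval_X,
    Matrix.cons_val_one, Matrix.head_cons, Matrix.cons_val_two, Matrix.tail_cons,
    AddMonoidAlgebra.single_pow, AddMonoidAlgebra.single_mul_single, one_pow, one_mul, mul_one,
    Prod.smul_mk, smul_eq_mul, Prod.mk_add_mk]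
  norm_num

lemma ρ_vf : ρ vf = AddMonoidAlgebra.single ((-3:ℤ),(0:ℤ),(3:ℤ)) 1 := by
  simp only [vf, map_mul, map_pow, ρ_algebraMap, ρ_a0inv, τS, aeval_X,
    Matrix.cons_val_one, Matrix.head_cons, Matrix.cons_val_two, Matrix.tail_cons,
    AddMonoidAlgebra.single_pow, AddMonoidAlgebra.single_mul_single, one_pow, one_mul, mul_one,
    Prod.smul_mk, smul_eq_mul, Prod.mk_add_mk]
  norm_num

lemma ρ_wf : ρ wf = AddMonoidAlgebra.single ((-2:ℤ),(1:ℤ),(1:ℤ)) 1 := by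
  simp only [wf, map_mul, map_pow, ρ_algebraMap, ρ_a0inv, τS, aeval_X,
    Matrix.cons_val_one, Matrix.head_cons, Matrix.cons_val_two, Matrix.tail_cons,
    AddMonoidAlgebra.single_pow, AddMonoidAlgebra.single_mul_single, one_pow, one_mul, mul_one,
    Prod.smul_mk, smul_eq_mul, Prod.mk_add_mk]
  norm_num

def φL : A2 →ₐ[ℂ] Lfpp := aeval ![uf, vf]

def ρa : Lfpp →ₐ[ℂ] Wfpp :=
  { ρ with
    commutes' := fun c => by
      have h1 : algebraMap ℂ Lfpp c = algebraMap Sfpp Lfpp (algebraMap ℂ Sfpp c) :=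
        (IsScalarTower.algebraMap_apply ℂ Sfpp Lfpp c)
      show ρ (algebraMap ℂ Lfpp c) = algebraMap ℂ Wfpp c
      rw [h1, ρ_algebraMap]
      exact τS.commutes c }

lemma ρa_apply (x : Lfpp) : ρa x = ρ x := rfl

def Tm : (Fin 2 →₀ ℕ) →+ ℤ × ℤ × ℤ where
  toFun a := ((-3) * ((a 0 : ℤ) + (a 1 : ℤ)), 3 * (a 0 : ℤ), 3 * (a 1 : ℤ))
  map_zero' := by simp
  map_add' a b := by
    simp only [Finsupp.add_apply, Prod.mk_add_mk, Prod.mk.injEq]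
    push_cast
    refine ⟨by ring, by ring, by ring⟩

lemma Tm_apply (a : Fin 2 →₀ ℕ) :
    Tm a = ((-3) * ((a 0 : ℤ) + (a 1 : ℤ)), 3 * (a 0 : ℤ), 3 * (a 1 : ℤ)) := rfl

lemma Tm_inj : Function.Injective Tm := by
  intro a b h
  simp only [Tm_apply, Prod.mk.injEq] at h
  obtain ⟨h1, h2, h3⟩ := h
  have h0 : a 0 = b 0 := by omega
  have h1' : a 1 = b 1 := by omega
  ext i
  fin_cases i
  exacts [h0, h1']

lemma φL_C (a : ℂ) : φL (C a) = algebraMap ℂ Lfpp a := aeval_C _ _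
lemma φL_X0 : φL (X 0) = uf := by simp [φL]
lemma φL_X1 : φL (X 1) = vf := by simp [φL]

lemma mdr_single (s : Fin 2 →₀ ℕ) (c : ℂ) :
    AddMonoidAlgebra.mapDomainRingHom ℂ Tm (AddMonoidAlgebra.single s c) = AddMonoidAlgebra.single (Tm s) c := by
  show AddMonoidAlgebra.mapDomain Tm (AddMonoidAlgebra.single s c) = AddMonoidAlgebra.single (Tm s) c
  exact AddMonoidAlgebra.mapDomain_single

lemma ρa_φL (g : A2) : ρa (φL g) = AddMonoidAlgebra.mapDomainRingHom ℂ Tm g := by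
  have h : ρa.toRingHom.comp φL.toRingHom = AddMonoidAlgebra.mapDomainRingHom ℂ Tm := by
    apply MvPolynomial.ringHom_ext
    · intro a
      show ρa (φL (C a)) = AddMonoidAlgebra.mapDomainRingHom ℂ Tm (C a)
      rw [φL_C, ρa.commutes a, C_apply, ← single_eq_monomial, mdr_single, map_zero]
      simp [AddMonoidAlgebra.coe_algebraMap]
    · intro i
      fin_cases i
      · show ρa (φL (X 0)) = AddMonoidAlgebra.mapDomainRingHom ℂ Tm (X 0)
        rw [φL_X0, ρa_apply, ρ_uf,
          show (X 0 : A2) = monomial (Finsupp.single 0 1) 1 from rfl,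
          ← single_eq_monomial, mdr_single]
        congr 1
        rw [Tm_apply]
        norm_num [Finsupp.single_apply]
      · show ρa (φL (X 1)) = AddMonoidAlgebra.mapDomainRingHom ℂ Tm (X 1)
        rw [φL_X1, ρa_apply, ρ_vf,
          show (X 1 : A2) = monomial (Finsupp.single 1 1) 1 from rfl,
          ← single_eq_monomial, mdr_single]
        congr 1
        rw [Tm_apply]
        norm_num [Finsupp.single_apply]
  exact congrFun (congrArg DFunLike.coe h) g

def toW (g : A2) : AddMonoidAlgebra ℂ (Fin 2 →₀ ℕ) := g

def mdW (g : A2) : Wfpp := AddMonoidAlgebra.mapDomain Tm (toW g)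

lemma notin_range_Tm {t : ℤ × ℤ × ℤ} (ht : ¬ (3:ℤ) ∣ t.2.1) : t ∉ Set.range Tm := by
  rintro ⟨b, rfl⟩
  exact ht ⟨(b 0 : ℤ), rfl⟩

lemma eval_in (g : A2) (a : Fin 2 →₀ ℕ) :
    (mdW g).coeff (Tm a) = (toW g).coeff a :=
  Finsupp.mapDomain_apply Tm_inj (toW g).coeff _

lemma eval_notin (g : A2) (t : ℤ × ℤ × ℤ) (ht : ¬ (3:ℤ) ∣ t.2.1) :
    (mdW g).coeff t = 0 :=
  Finsupp.mapDomain_notin_range _ _ (notin_range_Tm ht)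

lemma eval_B (g : A2) (s t : ℤ × ℤ × ℤ) :
    ((mdW g * AddMonoidAlgebra.single s 1 : Wfpp)).coeff t =
      (mdW g).coeff (t - s) :=
  (AddMonoidAlgebra.coeff_mul_single_apply _ 1 s t).trans (mul_one _)

lemma indep (g₀ g₁ g₂ : A2)
    (h : φL g₀ + φL g₁ * wf + φL g₂ * wf ^ 2 = 0) : g₀ = 0 ∧ g₁ = 0 ∧ g₂ = 0 := by
  have hwf2 : ρ (wf ^ 2) = AddMonoidAlgebra.single ((-4:ℤ),(2:ℤ),(2:ℤ)) 1 := by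
    rw [pow_two, map_mul, ρ_wf, AddMonoidAlgebra.single_mul_single, mul_one]
    congr 1
  have hW : mdW g₀
      + mdW g₁ * AddMonoidAlgebra.single ((-2:ℤ),(1:ℤ),(1:ℤ)) 1
      + mdW g₂ * AddMonoidAlgebra.single ((-4:ℤ),(2:ℤ),(2:ℤ)) 1
      = 0 := by
    have h2 := congrArg ρa h
    rw [map_add, map_add, map_mul, map_mul, map_zero, ρa_φL, ρa_φL, ρa_φL,
      show ρa wf = AddMonoidAlgebra.single ((-2:ℤ),(1:ℤ),(1:ℤ)) 1 from ρ_wf,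
      show ρa (wf ^ 2) = AddMonoidAlgebra.single ((-4:ℤ),(2:ℤ),(2:ℤ)) 1 from hwf2] at h2
    exact h2
  have key : ∀ t : ℤ × ℤ × ℤ,
      (mdW g₀).coeff t
      + ((mdW g₁ * AddMonoidAlgebra.single ((-2:ℤ),(1:ℤ),(1:ℤ)) 1 : Wfpp)).coeff t
      + ((mdW g₂ * AddMonoidAlgebra.single ((-4:ℤ),(2:ℤ),(2:ℤ)) 1 : Wfpp)).coeff t
      = 0 := by
    intro t
    have e : ((mdW g₀
      + mdW g₁ * AddMonoidAlgebra.single ((-2:ℤ),(1:ℤ),(1:ℤ)) 1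
      + mdW g₂ * AddMonoidAlgebra.single ((-4:ℤ),(2:ℤ),(2:ℤ)) 1 : Wfpp)).coeff t
        = (0 : Wfpp).coeff t := by rw [hW]
    rwa [AddMonoidAlgebra.coeff_add, AddMonoidAlgebra.coeff_add, Finsupp.add_apply,
      Finsupp.add_apply, AddMonoidAlgebra.coeff_zero, Finsupp.zero_apply] at e
  refine ⟨?_, ?_, ?_⟩
  · apply MvPolynomial.ext
    intro a
    have e := key (Tm a)
    rw [eval_B, eval_B, eval_in,
      eval_notin _ _ (by rw [show (Tm a - ((-2:ℤ),(1:ℤ),(1:ℤ))).2.1 = 3*(a 0:ℤ) - 1 by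
        rw [Tm_apply]; rfl]; omega),
      eval_notin _ _ (by rw [show (Tm a - ((-4:ℤ),(2:ℤ),(2:ℤ))).2.1 = 3*(a 0:ℤ) - 2 by
        rw [Tm_apply]; rfl]; omega)] at e
    simp at e ⊢; exact e
  · apply MvPolynomial.ext
    intro a
    have e := key (Tm a + ((-2:ℤ),(1:ℤ),(1:ℤ)))
    rw [eval_B, eval_B,
      show Tm a + ((-2:ℤ),(1:ℤ),(1:ℤ)) - ((-2:ℤ),(1:ℤ),(1:ℤ)) = Tm a from add_sub_cancel_right _ _,
      eval_in,
      eval_notin _ _ (by rw [show (Tm a + ((-2:ℤ),(1:ℤ),(1:ℤ))).2.1 = 3*(a 0:ℤ) + 1 by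
        rw [Tm_apply]; rfl]; omega),
      eval_notin _ _ (by rw [show (Tm a + ((-2:ℤ),(1:ℤ),(1:ℤ)) - ((-4:ℤ),(2:ℤ),(2:ℤ))).2.1
          = 3*(a 0:ℤ) + 1 - 2 by rw [Tm_apply]; rfl]; omega)] at e
    simp at e ⊢; exact e
  · apply MvPolynomial.ext
    intro a
    have e := key (Tm a + ((-4:ℤ),(2:ℤ),(2:ℤ)))
    rw [eval_B, eval_B,
      show Tm a + ((-4:ℤ),(2:ℤ),(2:ℤ)) - ((-4:ℤ),(2:ℤ),(2:ℤ)) = Tm a from add_sub_cancel_right _ _,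
      eval_in,
      eval_notin _ _ (by rw [show (Tm a + ((-4:ℤ),(2:ℤ),(2:ℤ))).2.1 = 3*(a 0:ℤ) + 2 by
        rw [Tm_apply]; rfl]; omega),
      eval_notin _ _ (by rw [show (Tm a + ((-4:ℤ),(2:ℤ),(2:ℤ)) - ((-2:ℤ),(1:ℤ),(1:ℤ))).2.1
          = 3*(a 0:ℤ) + 2 - 1 by rw [Tm_apply]; rfl]; omega)] at e
    simp at e ⊢; exact e

def ψfpp : MvPolynomial (Fin 3) ℂ →ₐ[ℂ] Bfpp := aeval ![ub, vb, wb]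
def Ifpp : Ideal (MvPolynomial (Fin 3) ℂ) := Ideal.span {X 2 ^ 3 - X 0 * X 1}
def Lmap : A2 →ₐ[ℂ] MvPolynomial (Fin 3) ℂ := aeval ![X 0, X 1]

lemma ψ_val (p : MvPolynomial (Fin 3) ℂ) : (ψfpp p : Lfpp) = aeval ![uf, vf, wf] p := by
  have h : (Bfpp.val.comp ψfpp) = aeval ![uf, vf, wf] := by
    rw [ψfpp, comp_aeval]
    congr 1
    funext i
    fin_cases i <;> rfl
  exact congrFun (congrArg DFunLike.coe h) p

lemma ψ_gen : ψfpp (X 2 ^ 3 - X 0 * X 1) = 0 := by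
  apply Subtype.ext
  rw [ψ_val, map_sub, map_pow, map_mul, aeval_X, aeval_X, aeval_X]
  simp only [Matrix.cons_val_zero, Matrix.cons_val_one, Matrix.head_cons,
    Matrix.cons_val_two, Matrix.tail_cons, ZeroMemClass.coe_zero]
  rw [wf_cube, sub_self]

lemma hIker : Ifpp ≤ RingHom.ker ψfpp := by
  rw [Ifpp, Ideal.span_le, Set.singleton_subset_iff]
  exact ψ_gen

lemma Lmap_X0 : Lmap (X 0) = X 0 := by simp [Lmap]
lemma Lmap_X1 : Lmap (X 1) = X 1 := by simp [Lmap]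

lemma decomp (p : MvPolynomial (Fin 3) ℂ) : ∃ g₀ g₁ g₂ : A2,
    Ideal.Quotient.mk Ifpp p =
      Ideal.Quotient.mk Ifpp (Lmap g₀ + Lmap g₁ * X 2 + Lmap g₂ * X 2 ^ 2) := by
  induction p using MvPolynomial.induction_on with
  | C a =>
    refine ⟨C a, 0, 0, ?_⟩
    congr 1
    simp [Lmap]
  | add p q hp hq =>
    obtain ⟨a₀, a₁, a₂, ha⟩ := hp
    obtain ⟨b₀, b₁, b₂, hb⟩ := hq
    refine ⟨a₀ + b₀, a₁ + b₁, a₂ + b₂, ?_⟩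
    rw [map_add, ha, hb, ← map_add]
    congr 1
    rw [map_add, map_add, map_add]
    ring
  | mul_X p i hp =>
    obtain ⟨g₀, g₁, g₂, hg⟩ := hp
    fin_cases i
    · refine ⟨X 0 * g₀, X 0 * g₁, X 0 * g₂, ?_⟩
      rw [map_mul, hg, ← map_mul]
      have heq : (Lmap g₀ + Lmap g₁ * X 2 + Lmap g₂ * X 2 ^ 2) * X 0 =
          Lmap (X 0 * g₀) + Lmap (X 0 * g₁) * X 2 + Lmap (X 0 * g₂) * X 2 ^ 2 := by
        rw [map_mul, map_mul, map_mul, Lmap_X0]; ring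
      exact congrArg _ heq
    · refine ⟨X 1 * g₀, X 1 * g₁, X 1 * g₂, ?_⟩
      rw [map_mul, hg, ← map_mul]
      have heq : (Lmap g₀ + Lmap g₁ * X 2 + Lmap g₂ * X 2 ^ 2) * X 1 =
          Lmap (X 1 * g₀) + Lmap (X 1 * g₁) * X 2 + Lmap (X 1 * g₂) * X 2 ^ 2 := by
        rw [map_mul, map_mul, map_mul, Lmap_X1]; ring
      exact congrArg _ heq
    · refine ⟨X 0 * X 1 * g₂, g₀, g₁, ?_⟩
      rw [map_mul, hg, ← map_mul, Ideal.Quotient.eq]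
      have heq : (Lmap g₀ + Lmap g₁ * X 2 + Lmap g₂ * X 2 ^ 2) * X 2 -
          (Lmap (X 0 * X 1 * g₂) + Lmap g₀ * X 2 + Lmap g₁ * X 2 ^ 2) =
          Lmap g₂ * (X 2 ^ 3 - X 0 * X 1) := by
        rw [map_mul, map_mul, Lmap_X0, Lmap_X1]
        ring
      have hmem : (Lmap g₀ + Lmap g₁ * X 2 + Lmap g₂ * X 2 ^ 2) * X 2 -
          (Lmap (X 0 * X 1 * g₂) + Lmap g₀ * X 2 + Lmap g₁ * X 2 ^ 2) ∈ Ifpp := by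
        rw [heq]
        exact Ideal.mul_mem_left _ _ (Ideal.subset_span (Set.mem_singleton _))
      exact hmem

lemma hcomp3 (g : A2) : aeval ![uf, vf, wf] (Lmap g) = φL g := by
  have h : (aeval ![uf, vf, wf]).comp Lmap = φL := by
    rw [Lmap, comp_aeval, φL]
    congr 1
    funext i
    fin_cases i <;> simp
  exact congrFun (congrArg DFunLike.coe h) g

lemma hker_le : RingHom.ker ψfpp ≤ Ifpp := by
  intro p hp
  rw [RingHom.mem_ker] at hp
  obtain ⟨g₀, g₁, g₂, hg⟩ := decomp p
  have hmem : p - (Lmap g₀ + Lmap g₁ * X 2 + Lmap g₂ * X 2 ^ 2) ∈ Ifpp :=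
    Ideal.Quotient.eq.mp hg
  have hr : ψfpp (Lmap g₀ + Lmap g₁ * X 2 + Lmap g₂ * X 2 ^ 2) = 0 := by
    have h2 := hIker hmem
    rw [RingHom.mem_ker, map_sub, hp] at h2
    exact (sub_eq_zero.mp h2).symm
  have hv := congrArg Subtype.val hr
  rw [ψ_val] at hv
  rw [map_add, map_add, map_mul, map_mul, map_pow] at hv
  rw [hcomp3, hcomp3, hcomp3] at hv
  have hX2 : aeval ![uf, vf, wf] (X 2 : MvPolynomial (Fin 3) ℂ) = wf := by simp
  rw [hX2] at hv
  obtain ⟨h0, h1, h2⟩ := indep g₀ g₁ g₂ hv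
  rw [h0, h1, h2] at hmem
  simpa using hmem

lemma hker_eq : RingHom.ker ψfpp = Ifpp := le_antisymm hker_le hIker

lemma ψ_surj : Function.Surjective ψfpp := by
  rintro ⟨x, hx⟩
  have hrange : Set.range ![uf, vf, wf] = {uf, vf, wf} := by
    ext y
    constructor
    · rintro ⟨i, rfl⟩
      fin_cases i
      · exact Set.mem_insert _ _
      · exact Set.mem_insert_iff.mpr (Or.inr (Set.mem_insert _ _))
      · exact Set.mem_insert_iff.mpr (Or.inr (Set.mem_insert_iff.mpr (Or.inr rfl)))
    · intro hy
      rcases Set.mem_insert_iff.mp hy with rfl | hy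
      · exact ⟨0, rfl⟩
      rcases Set.mem_insert_iff.mp hy with rfl | hy
      · exact ⟨1, rfl⟩
      rw [Set.mem_singleton_iff] at hy
      subst hy
      exact ⟨2, rfl⟩
  have hx' : x ∈ Algebra.adjoin ℂ (Set.range ![uf, vf, wf]) := by rw [hrange]; exact hx
  rw [Algebra.adjoin_range_eq_range_aeval] at hx'
  obtain ⟨p, hp⟩ := hx'
  refine ⟨p, Subtype.ext ?_⟩
  rw [ψ_val]
  exact hp

def efpp : (MvPolynomial (Fin 3) ℂ ⧸ Ifpp) ≃ₐ[ℂ] Bfpp :=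
  (Ideal.quotientEquivAlgOfEq ℂ hker_eq.symm).trans
    (Ideal.quotientKerAlgEquivOfSurjective ψ_surj)

lemma efpp_mk (p : MvPolynomial (Fin 3) ℂ) :
    efpp (Ideal.Quotient.mk Ifpp p) = ψfpp p := by
  simp only [efpp, AlgEquiv.trans_apply, Ideal.quotientEquivAlgOfEq_mk,
    Ideal.quotientKerAlgEquivOfSurjective_apply]
  rfl

lemma Jfpp_eq : Jfpp = Ideal.span {ub, vb, wb ^ 2} := rfl

def J2 : Ideal (MvPolynomial (Fin 3) ℂ) := Ideal.span {X 0, X 1, X 2 ^ 2}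

lemma efpp_X0 : efpp (Ideal.Quotient.mk Ifpp (X 0)) = ub := by rw [efpp_mk]; simp [ψfpp]
lemma efpp_X1 : efpp (Ideal.Quotient.mk Ifpp (X 1)) = vb := by rw [efpp_mk]; simp [ψfpp]
lemma efpp_X2 : efpp (Ideal.Quotient.mk Ifpp (X 2)) = wb := by rw [efpp_mk]; simp [ψfpp]

lemma hJ2map : J2.map (Ideal.Quotient.mkₐ ℂ Ifpp) =
    Ideal.span {Ideal.Quotient.mk Ifpp (X 0), Ideal.Quotient.mk Ifpp (X 1),
      Ideal.Quotient.mk Ifpp (X 2 ^ 2)} := by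
  rw [J2, Ideal.map_span, Set.image_insert_eq, Set.image_insert_eq, Set.image_singleton]
  rfl

lemma hJmap : Jfpp = Ideal.map (efpp : (MvPolynomial (Fin 3) ℂ ⧸ Ifpp) →+* Bfpp)
    (J2.map (Ideal.Quotient.mkₐ ℂ Ifpp)) := by
  rw [hJ2map, Ideal.map_span, Set.image_insert_eq, Set.image_insert_eq, Set.image_singleton,
    Jfpp_eq]
  congr 1
  have h0 : (efpp : (MvPolynomial (Fin 3) ℂ ⧸ Ifpp) →+* Bfpp) (Ideal.Quotient.mk Ifpp (X 0)) = ub := efpp_X0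
  have h1 : (efpp : (MvPolynomial (Fin 3) ℂ ⧸ Ifpp) →+* Bfpp) (Ideal.Quotient.mk Ifpp (X 1)) = vb := efpp_X1
  have h2 : (efpp : (MvPolynomial (Fin 3) ℂ ⧸ Ifpp) →+* Bfpp) (Ideal.Quotient.mk Ifpp (X 2 ^ 2)) = wb ^ 2 := by
    rw [show (Ideal.Quotient.mk Ifpp) (X 2 ^ 2) = (Ideal.Quotient.mk Ifpp (X 2)) ^ 2 from
      map_pow _ _ 2, map_pow]
    exact congrArg (· ^ 2) efpp_X2
  rw [h0, h1, h2]

lemma hIleJ2 : Ifpp ≤ J2 := by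
  rw [Ifpp, Ideal.span_le, Set.singleton_subset_iff, SetLike.mem_coe]
  refine sub_mem ?_ ?_
  · rw [pow_succ]
    exact Ideal.mul_mem_right _ _ (Ideal.subset_span (by simp [J2]))
  · exact Ideal.mul_mem_right _ _ (Ideal.subset_span (by simp [J2]))

def PQ : Type := Polynomial ℂ ⧸ Ideal.span {(Polynomial.X : Polynomial ℂ) ^ 2}

noncomputable instance : CommRing PQ := Ideal.Quotient.commRing _
noncomputable instance : Algebra ℂ PQ := Ideal.Quotient.algebra ℂ

def Fh : MvPolynomial (Fin 3) ℂ →ₐ[ℂ] (Polynomial ℂ ⧸ Ideal.span {(Polynomial.X : Polynomial ℂ) ^ 2}) :=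
  aeval ![0, 0, Ideal.Quotient.mk _ Polynomial.X]

lemma hFh : ∀ a ∈ J2, Fh a = 0 := by
  have hle : J2 ≤ RingHom.ker Fh := by
    rw [J2, Ideal.span_le]
    intro x hx
    simp only [Set.mem_insert_iff, Set.mem_singleton_iff] at hx
    rw [SetLike.mem_coe, RingHom.mem_ker]
    rcases hx with rfl | rfl | rfl
    · simp [Fh]
    · simp [Fh]
    · rw [map_pow, show Fh (X 2) = Ideal.Quotient.mk _ Polynomial.X from by simp [Fh],
        ← map_pow, Ideal.Quotient.eq_zero_iff_mem]
      exact Ideal.subset_span (Set.mem_singleton _)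
  exact fun a ha => hle ha

def Fq : (MvPolynomial (Fin 3) ℂ ⧸ J2) →ₐ[ℂ]
    (Polynomial ℂ ⧸ Ideal.span {(Polynomial.X : Polynomial ℂ) ^ 2}) :=
  Ideal.Quotient.liftₐ J2 Fh hFh

def Gh : Polynomial ℂ →ₐ[ℂ] (MvPolynomial (Fin 3) ℂ ⧸ J2) :=
  Polynomial.aeval (Ideal.Quotient.mk J2 (X 2))

lemma hGh : ∀ a ∈ Ideal.span {(Polynomial.X : Polynomial ℂ) ^ 2}, Gh a = 0 := by
  intro a ha
  rw [Ideal.mem_span_singleton] at ha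
  obtain ⟨c, rfl⟩ := ha
  rw [map_mul, show Gh (Polynomial.X ^ 2) = 0 from ?_, zero_mul]
  rw [show Gh (Polynomial.X ^ 2) = Ideal.Quotient.mk J2 (X 2 ^ 2) from by
    simp [Gh, map_pow], Ideal.Quotient.eq_zero_iff_mem]
  exact Ideal.subset_span (by simp)

def Gq : (Polynomial ℂ ⧸ Ideal.span {(Polynomial.X : Polynomial ℂ) ^ 2}) →ₐ[ℂ]
    (MvPolynomial (Fin 3) ℂ ⧸ J2) :=
  Ideal.Quotient.liftₐ _ Gh hGh

def E4 : (MvPolynomial (Fin 3) ℂ ⧸ J2) ≃ₐ[ℂ]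
    (Polynomial ℂ ⧸ Ideal.span {(Polynomial.X : Polynomial ℂ) ^ 2}) := by
  refine AlgEquiv.ofAlgHom Fq Gq ?_ ?_
  · apply Ideal.Quotient.algHom_ext
    apply Polynomial.algHom_ext
    simp [Fq, Gq, Ideal.Quotient.liftₐ_apply, Ideal.Quotient.lift_mk]
    simp [Gh, Fh]
  · apply Ideal.Quotient.algHom_ext
    apply MvPolynomial.algHom_ext
    intro i
    fin_cases i
    · show Gq (Fq (Ideal.Quotient.mk J2 (X 0))) = Ideal.Quotient.mk J2 (X 0)
      rw [show Fq (Ideal.Quotient.mk J2 (X 0)) = Fh (X 0) from by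
        simp [Fq, Ideal.Quotient.liftₐ_apply, Ideal.Quotient.lift_mk]; rfl]
      rw [show Fh (X 0) = 0 from by simp [Fh], map_zero]
      exact (Ideal.Quotient.eq_zero_iff_mem.mpr (Ideal.subset_span (by simp [J2]))).symm
    · show Gq (Fq (Ideal.Quotient.mk J2 (X 1))) = Ideal.Quotient.mk J2 (X 1)
      rw [show Fq (Ideal.Quotient.mk J2 (X 1)) = Fh (X 1) from by
        simp [Fq, Ideal.Quotient.liftₐ_apply, Ideal.Quotient.lift_mk]; rfl]
      rw [show Fh (X 1) = 0 from by simp [Fh], map_zero]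
      exact (Ideal.Quotient.eq_zero_iff_mem.mpr (Ideal.subset_span (by simp [J2]))).symm
    · show Gq (Fq (Ideal.Quotient.mk J2 (X 2))) = Ideal.Quotient.mk J2 (X 2)
      rw [show Fq (Ideal.Quotient.mk J2 (X 2)) = Fh (X 2) from by
        simp [Fq, Ideal.Quotient.liftₐ_apply, Ideal.Quotient.lift_mk]; rfl]
      rw [show Fh (X 2) = Ideal.Quotient.mk _ Polynomial.X from by simp [Fh]]
      simp [Gq, Ideal.Quotient.liftₐ_apply, Ideal.Quotient.lift_mk]
      simp [Gh]

def bigEquiv : (↥Bfpp ⧸ Jfpp) ≃ₐ[ℂ]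
    (Polynomial ℂ ⧸ Ideal.span {(Polynomial.X : Polynomial ℂ) ^ 2}) :=
  ((Ideal.quotientEquivAlg (J2.map (Ideal.Quotient.mkₐ ℂ Ifpp)) Jfpp efpp hJmap).symm).trans
    ((DoubleQuot.quotQuotEquivQuotSupₐ ℂ Ifpp J2).trans
      ((Ideal.quotientEquivAlgOfEq ℂ (sup_eq_right.mpr hIleJ2)).trans E4))

lemma frk_poly : Module.finrank ℂ
    (Polynomial ℂ ⧸ Ideal.span {(Polynomial.X : Polynomial ℂ) ^ 2}) = 2 := by
  have h2 : ((Polynomial.X : Polynomial ℂ) ^ 2) ≠ 0 := pow_ne_zero _ Polynomial.X_ne_zero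
  have hrfl : Module.finrank ℂ (Polynomial ℂ ⧸ Ideal.span {(Polynomial.X : Polynomial ℂ) ^ 2}) =
      Module.finrank ℂ (AdjoinRoot ((Polynomial.X : Polynomial ℂ) ^ 2)) := rfl
  rw [hrfl, (AdjoinRoot.powerBasis h2).finrank]
  show ((Polynomial.X : Polynomial ℂ) ^ 2).natDegree = 2
  simp

lemma frk_B : Module.finrank ℂ (↥Bfpp ⧸ Jfpp) = 2 := by
  rw [bigEquiv.toLinearEquiv.finrank_eq]
  exact frk_poly


/-- For the fake projective plane: the annihilator of `F = x₀⁴x₁x₂` under contraction is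
`(α₀⁵, α₁², α₂²)`; the chart subring `ℂ[α₁³/α₀³, α₂³/α₀³, α₁α₂/α₀²]` of `S_{α₀}` is
isomorphic to `ℂ[u,v,w]/(w³ − uv)` (with `u, v, w` mapping to the three generators); and
its quotient by the ideal generated by the images of `α₁²` and `α₂²` (the ideal
`(u, v, w²)`) is isomorphic to `ℂ[w]/(w²)`, a `ℂ`-vector space of dimension `2`. -/
theorem stmt18 :
    ({g : Sfpp | contract g (X 0 ^ 4 * X 1 * X 2) = 0} =
      ↑(Ideal.span {(X 0 : Sfpp) ^ 5, X 1 ^ 2, X 2 ^ 2})) ∧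
    (∃ e : (MvPolynomial (Fin 3) ℂ ⧸
        Ideal.span {(X 2 : MvPolynomial (Fin 3) ℂ) ^ 3 - X 0 * X 1}) ≃ₐ[ℂ] Bfpp,
      e (Ideal.Quotient.mk _ (X 0)) = ⟨uf, Algebra.subset_adjoin (by simp)⟩ ∧
      e (Ideal.Quotient.mk _ (X 1)) = ⟨vf, Algebra.subset_adjoin (by simp)⟩ ∧
      e (Ideal.Quotient.mk _ (X 2)) = ⟨wf, Algebra.subset_adjoin (by simp)⟩) ∧
    Nonempty ((↥Bfpp ⧸ Jfpp) ≃ₐ[ℂ]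
      (Polynomial ℂ ⧸ Ideal.span {(Polynomial.X : Polynomial ℂ) ^ 2})) ∧
    Module.finrank ℂ (↥Bfpp ⧸ Jfpp) = 2 := by
  refine ⟨part1, ⟨efpp, efpp_X0, efpp_X1, efpp_X2⟩, ⟨bigEquiv⟩, frk_B⟩

end
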